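/- The insertion of a connected adjacency matrix N into a connected adjacency matrix M at any position i via any decomposing map ι_i is again connected. -/

import Mathlib

open Matrix BigOperators
open scoped Classical

noncomputable section

/-- An adjacency matrix: symmetric with zero diagonal (entries in `ℕ`). -/
def IsAdj {ι : Type*} (M : Matrix ι ι ℕ) : Prop :=
  (∀ i j, M i j = M j i) ∧ ∀ i, M i i = 0

/-- Connectedness of the multigraph encoded by `M`. -/
def AdjConnected {ι : Type*} (M : Matrix ι ι ℕ) : Prop :=
  ∀ i j : ι, Relation.ReflTransGen (fun a b => M a b ≠ 0) i j

/-- A decomposing map at position `i`: each entry `M j i` (`j ≠ i`) of the `i`-th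
column is decomposed into an `n`-tuple of naturals summing to `M j i`. -/
def IsDecomp {m n : ℕ} (M : Matrix (Fin m) (Fin m) ℕ) (i : Fin m)
    (dec : Fin m → Fin n → ℕ) : Prop :=
  ∀ j : Fin m, j ≠ i → ∑ b, dec j b = M j i

/-- The insertion `(N ↪_{(i,ιᵢ)} M)`: vertex `i` of `M` is replaced by `N`, and the
edge multiplicities `M j i` are redistributed to the vertices of `N` according to
the decomposing map `dec`. -/
def insertAdj {m n : ℕ} (N : Matrix (Fin n) (Fin n) ℕ) (M : Matrix (Fin m) (Fin m) ℕ)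
    (i : Fin m) (dec : Fin m → Fin n → ℕ) :
    Matrix ({j : Fin m // j ≠ i} ⊕ Fin n) ({j : Fin m // j ≠ i} ⊕ Fin n) ℕ :=
  fun x y =>
    match x, y with
    | Sum.inl j, Sum.inl k => M j.1 k.1
    | Sum.inl j, Sum.inr b => dec j.1 b
    | Sum.inr b, Sum.inl j => dec j.1 b
    | Sum.inr a, Sum.inr b => N a b

/-- Inserting a connected adjacency matrix into a connected adjacency matrix
yields a connected adjacency matrix. -/
theorem insertAdj_connected (m n : ℕ) (hn : 0 < n) (M : Matrix (Fin m) (Fin m) ℕ)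
    (N : Matrix (Fin n) (Fin n) ℕ) (hM : IsAdj M) (hN : IsAdj N)
    (hMc : AdjConnected M) (hNc : AdjConnected N) (i : Fin m)
    (dec : Fin m → Fin n → ℕ) (hdec : IsDecomp M i dec) :
    AdjConnected (insertAdj N M i dec) := by
  set R : ({j : Fin m // j ≠ i} ⊕ Fin n) → ({j : Fin m // j ≠ i} ⊕ Fin n) → Prop :=
    fun a b => insertAdj N M i dec a b ≠ 0 with hR
  have hsymm : Symmetric R := by
    intro x y h
    rcases x with j | a <;> rcases y with k | b <;>
      simp only [hR, insertAdj] at h ⊢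
    · rwa [hM.1]
    · exact h
    · exact h
    · rwa [hN.1]
  set b0 : Fin n := ⟨0, hn⟩ with hb0
  -- inr vertices reach inr b0
  have hinr : ∀ a : Fin n, Relation.ReflTransGen R (Sum.inr a) (Sum.inr b0) := by
    intro a
    exact Relation.ReflTransGen.lift Sum.inr (fun x y h => h) _ _ (hNc a b0)
  -- inl vertices reach inr b0
  have aux : ∀ j : Fin m, Relation.ReflTransGen (fun a b => M a b ≠ 0) j i →
      ∀ hj : j ≠ i, Relation.ReflTransGen R (Sum.inl ⟨j, hj⟩) (Sum.inr b0) := by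
    intro j hpath
    induction hpath using Relation.ReflTransGen.head_induction_on with
    | refl =>
      intro hj; exact absurd rfl hj
    | head hstep _ ih =>
      rename_i a c _
      intro hj
      by_cases hc : c = i
      · subst hc
        have hsum : ∑ b, dec a b ≠ 0 := by
          rw [hdec a hj]; exact hstep
        obtain ⟨b, -, hb⟩ := Finset.exists_ne_zero_of_sum_ne_zero hsum
        refine Relation.ReflTransGen.head (b := Sum.inr b) ?_ (hinr b)
        simpa [hR, insertAdj] using hb
      · refine Relation.ReflTransGen.head (b := Sum.inl ⟨c, hc⟩) ?_ (ih hc)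
        simpa [hR, insertAdj] using hstep
  have key : ∀ x, Relation.ReflTransGen R x (Sum.inr b0) := by
    rintro (⟨j, hj⟩ | a)
    · exact aux j (hMc j i) hj
    · exact hinr a
  intro x y
  exact (key x).trans ((fun h => @Std.Symm.symm _ _ (@Relation.ReflTransGen.stdSymm _ R ⟨fun a b h => hsymm h⟩) _ _ h) (key y))

end
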